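/- arXiv:1306.0062 — 2 statements merged into one kernel-verified Lean document; each statement's English description precedes it below -/
import Mathlib

section
/- Pythagorean theorem for pseudo-determinants: Let A be a real symmetric n×n matrix of rank k. Then the square of the coefficient of x^{n−k} in the characteristic polynomial det(x·I − A) equals Σ_{(I,J)} det(A_{I,J})², the sum running over all pairs (I,J) of k-element subsets of {1,…,n}. (The left-hand side is Det(A)², the square of the product of the k nonzero eigenvalues of A.) -/
open Matrix

/-- The minor of a real `n × n` matrix `A` given by `k`-element sets `I` of row indices and
`J` of column indices. For `k = 0` it equals `1`. -/
def Matrix.minorOn {n k : ℕ} (A : Matrix (Fin n) (Fin n) ℝ)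
    (I : {s : Finset (Fin n) // s.card = k}) (J : {s : Finset (Fin n) // s.card = k}) : ℝ :=
  (A.submatrix (I.1.orderEmbOfFin I.2) (J.1.orderEmbOfFin J.2)).det

open Finset Equiv

noncomputable section

theorem step1 {k n : ℕ} (M : Matrix (Fin k) (Fin n) ℝ) (N : Matrix (Fin n) (Fin k) ℝ) :
    (M * N).det
      = ∑ f : Fin k → Fin n, (∏ i, N (f i) i) * (M.submatrix id f).det := by
  rw [det_apply']
  have : ∀ σ : Equiv.Perm (Fin k),
      (∏ i, (M * N) (σ i) i) = ∑ f ∈ Fintype.piFinset (fun _ : Fin k => (univ : Finset (Fin n))),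
        ∏ i, (M (σ i) (f i) * N (f i) i) := by
    intro σ
    simp only [mul_apply]
    rw [Finset.prod_univ_sum]
  simp_rw [this, Finset.mul_sum]
  rw [Finset.sum_comm]
  rw [show (Fintype.piFinset (fun _ : Fin k => (univ : Finset (Fin n)))) = univ by ext f; simp]
  refine Fintype.sum_congr _ _ fun f => ?_
  rw [det_apply', Finset.mul_sum]
  refine Fintype.sum_congr _ _ fun σ => ?_
  simp only [submatrix_apply, id_eq, Finset.prod_mul_distrib]
  ring

theorem cauchyBinet {k n : ℕ} (hkn : k ≤ n) (M : Matrix (Fin k) (Fin n) ℝ)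
    (N : Matrix (Fin n) (Fin k) ℝ) :
    (M * N).det = ∑ S : {s : Finset (Fin n) // s.card = k},
      (M.submatrix id (S.1.orderEmbOfFin S.2)).det *
        (N.submatrix (S.1.orderEmbOfFin S.2) id).det := by
  classical
  obtain ⟨s₀, -, hs₀⟩ := Finset.exists_subset_card_eq
    (show k ≤ (Finset.univ : Finset (Fin n)).card by simpa using hkn)
  haveI : Nonempty {s : Finset (Fin n) // s.card = k} := ⟨⟨s₀, hs₀⟩⟩
  rw [step1]
  rw [← Finset.sum_filter_of_ne (p := fun f => Function.Injective f)
    (fun f _ hne => by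
      by_contra hf
      apply hne
      obtain ⟨i, j, hij, hne'⟩ : ∃ i j, f i = f j ∧ i ≠ j := by
        simp only [Function.Injective, not_forall] at hf
        obtain ⟨i, j, h1, h2⟩ := hf
        exact ⟨i, j, h1, h2⟩
      rw [Matrix.det_zero_of_column_eq hne' (fun x => by simp [hij]), mul_zero])]
  -- reindex by (S, σ)
  have key : ∑ p : {s : Finset (Fin n) // s.card = k} × Equiv.Perm (Fin k),
      (∏ i, N (p.1.1.orderEmbOfFin p.1.2 (p.2 i)) i) *
        (M.submatrix id (p.1.1.orderEmbOfFin p.1.2 ∘ p.2)).det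
      = ∑ f ∈ Finset.univ.filter (fun f : Fin k → Fin n => Function.Injective f),
        (∏ i, N (f i) i) * (M.submatrix id f).det := by
    refine Finset.sum_nbij (fun p => p.1.1.orderEmbOfFin p.1.2 ∘ p.2) ?_ ?_ ?_ ?_
    · intro p _
      simp only [Finset.mem_filter, Finset.mem_univ, true_and]
      exact ((p.1.1.orderEmbOfFin p.1.2).injective).comp p.2.injective
    · intro p _ q _ hpq
      beta_reduce at hpq
      have hS : p.1 = q.1 := by
        refine Subtype.ext ?_
        have h1 : Set.range (p.1.1.orderEmbOfFin p.1.2 ∘ p.2) = (p.1.1 : Set (Fin n)) := by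
          rw [Set.range_comp, Equiv.range_eq_univ, Set.image_univ,
            Finset.range_orderEmbOfFin]
        have h2 : Set.range (q.1.1.orderEmbOfFin q.1.2 ∘ q.2) = (q.1.1 : Set (Fin n)) := by
          rw [Set.range_comp, Equiv.range_eq_univ, Set.image_univ,
            Finset.range_orderEmbOfFin]
        have := h1.symm.trans (by rw [hpq, h2])
        exact_mod_cast Finset.coe_injective this
      obtain ⟨⟨S, hS'⟩, σ⟩ := p
      obtain ⟨⟨T, hT'⟩, τ⟩ := q
      cases hS
      refine Prod.ext rfl ?_
      ext i
      exact congrArg Fin.val ((S.orderEmbOfFin hS').injective (congrFun hpq i))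
    · intro f hf
      rcases Finset.mem_filter.mp hf with ⟨-, hf⟩
      have hcard : (Finset.univ.image f).card = k := by
        rw [Finset.card_image_of_injective _ hf, Finset.card_univ, Fintype.card_fin]
      have hmem : ∀ i, f i ∈ Finset.univ.image f := fun i => Finset.mem_image_of_mem f (Finset.mem_univ i)
      have hinj : Function.Injective
          (fun i => ((Finset.univ.image f).orderIsoOfFin hcard).symm ⟨f i, hmem i⟩) := by
        intro a b hab
        have := ((Finset.univ.image f).orderIsoOfFin hcard).symm.injective hab
        exact hf (congrArg Subtype.val this)
      refine ⟨⟨⟨Finset.univ.image f, hcard⟩,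
        Equiv.ofBijective _ (Finite.injective_iff_bijective.mp hinj)⟩, Finset.mem_univ _, ?_⟩
      funext i
      simp only [Function.comp_apply, Equiv.ofBijective_apply]
      rw [← Finset.coe_orderIsoOfFin_apply]
      rw [OrderIso.apply_symm_apply]
    · intro p _
      rfl
  rw [← key, Fintype.sum_prod_type]
  refine Fintype.sum_congr _ _ fun S => ?_
  rw [det_apply' (N.submatrix (S.1.orderEmbOfFin S.2) id), Finset.mul_sum]
  refine Fintype.sum_congr _ _ fun σ => ?_
  have : M.submatrix id (S.1.orderEmbOfFin S.2 ∘ σ)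
      = (M.submatrix id (S.1.orderEmbOfFin S.2)).submatrix id σ := by
    rw [Matrix.submatrix_submatrix]
    rfl
  rw [this, Matrix.det_permute']
  simp only [Matrix.submatrix_apply, id_eq]
  ring

/-- The `k`-th compound matrix. -/
def cmpd {n k : ℕ} (A : Matrix (Fin n) (Fin n) ℝ) :
    Matrix {s : Finset (Fin n) // s.card = k} {s : Finset (Fin n) // s.card = k} ℝ :=
  Matrix.of fun I J => A.minorOn I J

lemma card_le {n k : ℕ} (I : {s : Finset (Fin n) // s.card = k}) : k ≤ n := by
  rw [← I.2]
  simpa using Finset.card_le_card (Finset.subset_univ I.1)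

theorem cmpd_mul {n k : ℕ} (A B : Matrix (Fin n) (Fin n) ℝ) :
    (cmpd (k := k) (A * B)) = cmpd A * cmpd B := by
  ext I J
  have hkn : k ≤ n := card_le I
  rw [Matrix.mul_apply]
  show ((A * B).submatrix (I.1.orderEmbOfFin I.2) (J.1.orderEmbOfFin J.2)).det = _
  rw [Matrix.submatrix_mul A B _ id _ Function.bijective_id]
  rw [cauchyBinet hkn]
  refine Fintype.sum_congr _ _ fun S => ?_
  rw [Matrix.submatrix_submatrix, Matrix.submatrix_submatrix]
  rfl

theorem minorOn_eq_zero {n k : ℕ} {A : Matrix (Fin n) (Fin n) ℝ}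
    (hdiag : ∀ i j, i ≠ j → A i j = 0)
    {I J : {s : Finset (Fin n) // s.card = k}} (hIJ : I ≠ J) : A.minorOn I J = 0 := by
  obtain ⟨i0, hi0I, hi0J⟩ : ∃ i0, i0 ∈ I.1 ∧ i0 ∉ J.1 := by
    by_contra h
    push_neg at h
    exact hIJ (Subtype.ext (Finset.eq_of_subset_of_card_le h (by rw [I.2, J.2])))
  obtain ⟨r, hr⟩ : ∃ r, I.1.orderEmbOfFin I.2 r = i0 := by
    have := Finset.range_orderEmbOfFin I.1 I.2
    have : i0 ∈ Set.range (I.1.orderEmbOfFin I.2) := by rw [this]; exact_mod_cast hi0I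
    exact this
  refine Matrix.det_eq_zero_of_row_eq_zero r fun j => ?_
  rw [Matrix.submatrix_apply, hr]
  refine hdiag _ _ fun h => hi0J ?_
  rw [h]
  exact Finset.orderEmbOfFin_mem J.1 J.2 j

theorem cmpd_one {n k : ℕ} : cmpd (k := k) (1 : Matrix (Fin n) (Fin n) ℝ) = 1 := by
  ext I J
  by_cases hIJ : I = J
  · subst hIJ
    show ((1 : Matrix (Fin n) (Fin n) ℝ).submatrix _ _).det = _
    rw [Matrix.submatrix_one _ (I.1.orderEmbOfFin I.2).injective, Matrix.det_one,
      Matrix.one_apply_eq]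
  · show (1 : Matrix (Fin n) (Fin n) ℝ).minorOn I J = _
    rw [minorOn_eq_zero (fun i j h => Matrix.one_apply_ne h) hIJ, Matrix.one_apply_ne hIJ]

theorem cmpd_diagonal {n k : ℕ} (d : Fin n → ℝ) :
    cmpd (k := k) (Matrix.diagonal d) =
      Matrix.diagonal (fun I : {s : Finset (Fin n) // s.card = k} =>
        ∏ i, d (I.1.orderEmbOfFin I.2 i)) := by
  ext I J
  by_cases hIJ : I = J
  · subst hIJ
    show ((Matrix.diagonal d).submatrix _ _).det = _
    rw [Matrix.submatrix_diagonal d _ (I.1.orderEmbOfFin I.2).injective, Matrix.det_diagonal,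
      Matrix.diagonal_apply_eq]
    rfl
  · show (Matrix.diagonal d).minorOn I J = _
    rw [minorOn_eq_zero (fun i j h => Matrix.diagonal_apply_ne d h) hIJ,
      Matrix.diagonal_apply_ne _ hIJ]

theorem cmpd_transpose {n k : ℕ} (A : Matrix (Fin n) (Fin n) ℝ) :
    cmpd (k := k) Aᵀ = (cmpd A)ᵀ := by
  ext I J
  show (Aᵀ.submatrix _ _).det = (A.submatrix _ _).det
  rw [← Matrix.transpose_submatrix, Matrix.det_transpose]

theorem trace_cmpd_conj {n k : ℕ} (U D V : Matrix (Fin n) (Fin n) ℝ) (h2 : V * U = 1) :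
    (cmpd (k := k) (U * D * V)).trace = (cmpd (k := k) D).trace := by
  rw [cmpd_mul, cmpd_mul, Matrix.trace_mul_cycle, ← cmpd_mul, h2, cmpd_one, Matrix.one_mul]

open Polynomial in
theorem charpoly_conj {n : ℕ} (P B Q : Matrix (Fin n) (Fin n) ℝ) (h1 : P * Q = 1) :
    (P * B * Q).charpoly = B.charpoly := by
  have hmain : Matrix.charmatrix (P * B * Q)
      = (C : ℝ →+* ℝ[X]).mapMatrix P * Matrix.charmatrix B * (C : ℝ →+* ℝ[X]).mapMatrix Q := by
    rw [Matrix.charmatrix, Matrix.charmatrix, Matrix.mul_sub, Matrix.sub_mul]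
    congr 1
    · rw [← Matrix.scalar_commute X (fun r' => Commute.all X r') ((C : ℝ →+* ℝ[X]).mapMatrix P),
        Matrix.mul_assoc, ← _root_.map_mul ((C : ℝ →+* ℝ[X]).mapMatrix), h1, _root_.map_one,
        Matrix.mul_one]
    · rw [_root_.map_mul, _root_.map_mul]
  rw [Matrix.charpoly, Matrix.charpoly, hmain, Matrix.det_mul, Matrix.det_mul,
    mul_comm ((C : ℝ →+* ℝ[X]).mapMatrix P).det _, mul_assoc, ← Matrix.det_mul,
    ← _root_.map_mul ((C : ℝ →+* ℝ[X]).mapMatrix) P Q, h1, _root_.map_one, Matrix.det_one, mul_one]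

open Polynomial in
theorem charpoly_diagonal {n : ℕ} (d : Fin n → ℝ) :
    (Matrix.diagonal d).charpoly = ∏ i, (X - C (d i)) := by
  have : Matrix.charmatrix (Matrix.diagonal d)
      = Matrix.diagonal (fun i => X - C (d i)) := by
    ext i j
    by_cases h : i = j
    · subst h; rw [Matrix.charmatrix_apply_eq, Matrix.diagonal_apply_eq, Matrix.diagonal_apply_eq]
    · rw [Matrix.charmatrix_apply_ne _ _ _ h, Matrix.diagonal_apply_ne _ h,
        Matrix.diagonal_apply_ne _ h, map_zero, neg_zero]
  rw [Matrix.charpoly, this, Matrix.det_diagonal]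

open Polynomial in
theorem coeff_prod_X_sub_C {n k : ℕ} (hkn : k ≤ n) (d : Fin n → ℝ) :
    (∏ i, (X - C (d i))).coeff (n - k) =
      (-1 : ℝ)^k * ∑ I : {s : Finset (Fin n) // s.card = k}, ∏ i ∈ I.1, d i := by
  have h1 : (∏ i, (X - C (d i)))
      = (((Finset.univ : Finset (Fin n)).val.map d).map fun t => X - C t).prod := by
    rw [Multiset.map_map]
    rfl
  have hcard : Multiset.card ((Finset.univ : Finset (Fin n)).val.map d) = n := by
    simp
  rw [h1, Multiset.prod_X_sub_C_coeff _ (by rw [hcard]; omega), hcard,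
    Nat.sub_sub_self hkn, Finset.esymm_map_val]
  congr 1
  rw [Finset.sum_subtype (Finset.univ.powersetCard k)
    (fun s => Finset.mem_powersetCard_univ) (fun s => ∏ i ∈ s, d i)]

theorem prod_emb {n k : ℕ} (d : Fin n → ℝ) (I : {s : Finset (Fin n) // s.card = k}) :
    ∏ i, d (I.1.orderEmbOfFin I.2 i) = ∏ i ∈ I.1, d i := by
  refine Finset.prod_nbij (I.1.orderEmbOfFin I.2) (fun i _ => Finset.orderEmbOfFin_mem I.1 I.2 i)
    (fun a _ b _ hab => (I.1.orderEmbOfFin I.2).injective hab) ?_ (fun _ _ => rfl)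
  intro x hx
  have : (x : Fin n) ∈ Set.range (I.1.orderEmbOfFin I.2) := by
    rw [Finset.range_orderEmbOfFin]
    exact_mod_cast hx
  obtain ⟨i, hi⟩ := this
  exact ⟨i, by simp, hi⟩

theorem esymm_eq_prod_nonzero {n k : ℕ} (lam : Fin n → ℝ)
    (hcard : (Finset.univ.filter fun i => lam i ≠ 0).card = k) :
    ∑ I : {s : Finset (Fin n) // s.card = k}, ∏ i ∈ I.1, lam i
      = ∏ i ∈ Finset.univ.filter (fun i => lam i ≠ 0), lam i := by
  classical
  have := Finset.sum_eq_single (M := ℝ) (f := fun I : {s : Finset (Fin n) // s.card = k} => ∏ i ∈ I.1, lam i)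
    (s := Finset.univ) ⟨Finset.univ.filter (fun i => lam i ≠ 0), hcard⟩
    ?_ (by simp)
  · rw [this]
  · intro I _ hne
    obtain ⟨i0, hi0I, hi0Z⟩ : ∃ i0, i0 ∈ I.1 ∧ i0 ∉ Finset.univ.filter (fun i => lam i ≠ 0) := by
      by_contra h
      push_neg at h
      exact hne (Subtype.ext (Finset.eq_of_subset_of_card_le h (by rw [I.2, hcard])))
    have : lam i0 = 0 := by
      by_contra h
      exact hi0Z (by simp [h])
    exact Finset.prod_eq_zero hi0I this

/-- Pythagorean theorem for pseudo-determinants: if `A` is a real symmetric `n × n` matrix of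
rank `k`, then the square of the coefficient of `x^{n-k}` in its characteristic polynomial
(i.e. `Det(A)²`, the square of the product of the `k` nonzero eigenvalues) equals the sum of
the squares of all `k × k` minors of `A`. -/
theorem pdet_sq_eq_sum_sq_minors {n : ℕ} (A : Matrix (Fin n) (Fin n) ℝ) (hA : A.IsSymm)
    (k : ℕ) (hk : A.rank = k) :
    (A.charpoly.coeff (n - k)) ^ 2 =
      ∑ I : {s : Finset (Fin n) // s.card = k}, ∑ J : {s : Finset (Fin n) // s.card = k},
        (A.minorOn I J) ^ 2 := by
  classical
  have hH : A.IsHermitian := by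
    show Aᴴ = A
    ext i j
    show star (A j i) = A i j
    rw [star_trivial]
    exact congrFun (congrFun hA i) j
  set lam : Fin n → ℝ := hH.eigenvalues with hlam
  set U : Matrix (Fin n) (Fin n) ℝ := (Matrix.IsHermitian.eigenvectorUnitary hH : Matrix (Fin n) (Fin n) ℝ) with hU
  have hspec : A = U * Matrix.diagonal lam * star U := by
    have := hH.spectral_theorem
    rwa [show RCLike.ofReal ∘ lam = lam by rw [RCLike.ofReal_real_eq_id]; rfl] at this
  have hU1 : U * star U = 1 :=
    (Matrix.mem_unitaryGroup_iff).mp (Matrix.IsHermitian.eigenvectorUnitary hH).2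
  have hU2 : star U * U = 1 :=
    (Matrix.mem_unitaryGroup_iff').mp (Matrix.IsHermitian.eigenvectorUnitary hH).2
  have hkn : k ≤ n := by
    rw [← hk]
    simpa using A.rank_le_card_width
  have hcard : (Finset.univ.filter fun i => lam i ≠ 0).card = k := by
    rw [← hk, hH.rank_eq_card_non_zero_eigs, Fintype.card_subtype]
  -- LHS
  have hchar : A.charpoly = ∏ i, (Polynomial.X - Polynomial.C (lam i)) := by
    conv_lhs => rw [hspec]
    rw [charpoly_conj _ _ _ hU1, charpoly_diagonal]
  have hLHS : A.charpoly.coeff (n - k)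
      = (-1 : ℝ)^k * ∏ i ∈ Finset.univ.filter (fun i => lam i ≠ 0), lam i := by
    rw [hchar, coeff_prod_X_sub_C hkn, esymm_eq_prod_nonzero lam hcard]
  -- RHS
  have hRHS : (∑ I : {s : Finset (Fin n) // s.card = k}, ∑ J : {s : Finset (Fin n) // s.card = k},
        (A.minorOn I J) ^ 2)
      = ∏ i ∈ Finset.univ.filter (fun i => lam i ≠ 0), (lam i * lam i) := by
    have h1 : (∑ I : {s : Finset (Fin n) // s.card = k}, ∑ J : {s : Finset (Fin n) // s.card = k},
        (A.minorOn I J) ^ 2) = (cmpd (k := k) A * cmpd (k := k) A).trace := by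
      rw [Matrix.trace]
      refine Fintype.sum_congr _ _ fun I => ?_
      rw [Matrix.diag_apply, Matrix.mul_apply]
      refine Fintype.sum_congr _ _ fun J => ?_
      rw [sq]
      show A.minorOn I J * A.minorOn I J = cmpd A I J * cmpd A J I
      congr 1
      show (A.submatrix (I.1.orderEmbOfFin I.2) (J.1.orderEmbOfFin J.2)).det
          = (A.submatrix (J.1.orderEmbOfFin J.2) (I.1.orderEmbOfFin I.2)).det
      conv_rhs => rw [← Matrix.det_transpose, Matrix.transpose_submatrix, hA]
    have hAA : A * A = U * (Matrix.diagonal fun i => lam i * lam i) * star U := by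
      conv_lhs => rw [hspec]
      rw [show U * Matrix.diagonal lam * star U * (U * Matrix.diagonal lam * star U)
          = U * Matrix.diagonal lam * (star U * U) * Matrix.diagonal lam * star U by
        simp only [Matrix.mul_assoc], hU2, Matrix.mul_one,
        show U * Matrix.diagonal lam * Matrix.diagonal lam * star U
          = U * (Matrix.diagonal lam * Matrix.diagonal lam) * star U by
          simp only [Matrix.mul_assoc], Matrix.diagonal_mul_diagonal]
    rw [h1, ← cmpd_mul, hAA, trace_cmpd_conj _ _ _ hU2, cmpd_diagonal, Matrix.trace_diagonal]
    have h2 : ∀ I : {s : Finset (Fin n) // s.card = k},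
        (∏ i, (fun i => lam i * lam i) (I.1.orderEmbOfFin I.2 i)) = ∏ i ∈ I.1, (lam i * lam i) :=
      fun I => prod_emb (fun i => lam i * lam i) I
    rw [Fintype.sum_congr _ _ h2]
    rw [esymm_eq_prod_nonzero (fun i => lam i * lam i)
      (by rw [← hcard]; congr 1; exact Finset.filter_congr fun i _ => by simp [mul_self_eq_zero])]
    refine Finset.prod_congr ?_ fun _ _ => rfl
    exact Finset.filter_congr fun i _ => by simp [mul_self_eq_zero]
  rw [hLHS, hRHS, mul_pow, ← pow_mul, mul_comm k 2, pow_mul, neg_one_sq, one_pow, one_mul,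
    ← Finset.prod_pow]
  exact Finset.prod_congr rfl fun i _ => sq (lam i)
end
end

section
/- Let A be a real symmetric n×n matrix and let 0 ≤ k ≤ n. Then (−1)^k times the coefficient of x^{n−k} in the characteristic polynomial det(x·I − A²) of A² equals Σ_{(I,J)} det(A_{I,J})², the sum running over all pairs (I,J) of k-element subsets of {1,…,n}; when k = 0 both sides equal 1. -/
open Matrix Polynomial Equiv

section Aux
variable {R : Type*} [CommRing R]

theorem det_mul_expansion {k n : ℕ} (A : Matrix (Fin k) (Fin n) R) (B : Matrix (Fin n) (Fin k) R) :
    det (A * B) = ∑ p : Fin k → Fin n, det (A.submatrix id p) * ∏ i, B (p i) i := by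
  calc det (A * B)
      = ∑ σ : Perm (Fin k), Equiv.Perm.sign σ • ∏ i, (A * B) (σ i) i := det_apply _
    _ = ∑ σ : Perm (Fin k), ∑ p : Fin k → Fin n,
          Equiv.Perm.sign σ • ∏ i, (A (σ i) (p i) * B (p i) i) := by
        refine Finset.sum_congr rfl fun σ _ => ?_
        simp only [mul_apply, Finset.prod_univ_sum, Fintype.piFinset_univ, Finset.smul_sum]
    _ = ∑ p : Fin k → Fin n, ∑ σ : Perm (Fin k),
          Equiv.Perm.sign σ • ∏ i, (A (σ i) (p i) * B (p i) i) := Finset.sum_comm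
    _ = ∑ p : Fin k → Fin n, det (A.submatrix id p) * ∏ i, B (p i) i := by
        refine Finset.sum_congr rfl fun p _ => ?_
        rw [det_apply, Finset.sum_mul]
        refine Finset.sum_congr rfl fun σ _ => ?_
        rw [Finset.prod_mul_distrib, smul_mul_assoc]
        rfl

theorem cauchy_binet {k n : ℕ} (A : Matrix (Fin k) (Fin n) R) (B : Matrix (Fin n) (Fin k) R) :
    det (A * B) = ∑ J : {s : Finset (Fin n) // s.card = k},
      det (A.submatrix id (J.1.orderEmbOfFin J.2)) * det (B.submatrix (J.1.orderEmbOfFin J.2) id) := by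
  rw [det_mul_expansion]
  have h0 : ∀ p : Fin k → Fin n, ¬ Function.Injective p → det (A.submatrix id p) = 0 := by
    intro p hp
    rw [Function.not_injective_iff] at hp
    obtain ⟨i, j, hpij, hij⟩ := hp
    exact det_zero_of_column_eq hij (fun x => by simp [submatrix, hpij])
  rw [← Finset.sum_filter_of_ne (p := fun p : Fin k → Fin n => Function.Injective p)
      (fun p _ h => by
        by_contra hinj
        exact h (by rw [h0 p hinj, zero_mul]))]
  -- RHS: expand each det (B.submatrix emb id) via det_apply and push in
  have rhs : ∀ J : {s : Finset (Fin n) // s.card = k},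
      det (A.submatrix id (J.1.orderEmbOfFin J.2)) * det (B.submatrix (J.1.orderEmbOfFin J.2) id)
      = ∑ σ : Equiv.Perm (Fin k),
          det (A.submatrix id (J.1.orderEmbOfFin J.2 ∘ σ)) * ∏ i, B (J.1.orderEmbOfFin J.2 (σ i)) i := by
    intro J
    rw [det_apply (B.submatrix (J.1.orderEmbOfFin J.2) id), Finset.mul_sum]
    refine Finset.sum_congr rfl fun σ _ => ?_
    have : A.submatrix id (J.1.orderEmbOfFin J.2 ∘ σ)
        = (A.submatrix id (J.1.orderEmbOfFin J.2)).submatrix id σ := rfl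
    rw [this, det_permute']
    simp only [submatrix_apply, id_eq, Units.smul_def, zsmul_eq_mul]
    ring
  simp only [rhs]
  have key : ∀ (J : {s : Finset (Fin n) // s.card = k}),
      (Finset.univ.image (J.1.orderEmbOfFin J.2)) = J.1 := by
    intro J
    ext a
    simp only [Finset.mem_image, Finset.mem_univ, true_and]
    constructor
    · rintro ⟨i, rfl⟩; exact Finset.orderEmbOfFin_mem _ _ _
    · intro ha
      refine ⟨(J.1.orderIsoOfFin J.2).symm ⟨a, ha⟩, ?_⟩
      rw [← Finset.coe_orderIsoOfFin_apply, OrderIso.apply_symm_apply]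
  have step2 : ∑ p ∈ Finset.univ.filter (fun p : Fin k → Fin n => Function.Injective p),
      det (A.submatrix id p) * ∏ i, B (p i) i
      = ∑ x : {s : Finset (Fin n) // s.card = k} × Equiv.Perm (Fin k),
        det (A.submatrix id ((x.1.1.orderEmbOfFin x.1.2) ∘ x.2)) *
          ∏ i, B (x.1.1.orderEmbOfFin x.1.2 (x.2 i)) i := by
    refine (Finset.sum_bij (fun (x : {s : Finset (Fin n) // s.card = k} × Equiv.Perm (Fin k)) _ =>
        (x.1.1.orderEmbOfFin x.1.2) ∘ x.2) ?_ ?_ ?_ ?_).symm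
    · intro x _
      simp only [Finset.mem_filter, Finset.mem_univ, true_and]
      exact ((x.1.1.orderEmbOfFin x.1.2).injective).comp x.2.injective
    · rintro ⟨J, σ⟩ _ ⟨J', σ'⟩ _ h
      have himg : J.1 = J'.1 := by
        rw [← key J, ← key J']
        ext a
        simp only [Finset.mem_image, Finset.mem_univ, true_and]
        constructor
        · rintro ⟨i, rfl⟩
          exact ⟨σ' (σ.symm i), by simpa using (congrFun h (σ.symm i)).symm⟩
        · rintro ⟨i, rfl⟩
          exact ⟨σ (σ'.symm i), by simpa using congrFun h (σ'.symm i)⟩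
      have hJ : J = J' := Subtype.ext himg
      subst hJ
      have hσ : σ = σ' := by
        ext x
        exact congrArg Fin.val ((J.1.orderEmbOfFin J.2).injective (congrFun h x))
      rw [hσ]
    · intro p hp
      simp only [Finset.mem_filter, Finset.mem_univ, true_and] at hp
      set J : Finset (Fin n) := Finset.univ.image p with hJdef
      have hJ : J.card = k := by
        rw [hJdef, Finset.card_image_of_injective _ hp, Finset.card_univ, Fintype.card_fin]
      have hmem : ∀ x, p x ∈ J := fun x => Finset.mem_image_of_mem _ (Finset.mem_univ x)
      have hpJinj : Function.Injective (fun x => (⟨p x, hmem x⟩ : J)) :=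
        fun a b hab => hp (congrArg Subtype.val hab)
      have hpJbij : Function.Bijective (fun x => (⟨p x, hmem x⟩ : J)) :=
        (Fintype.bijective_iff_injective_and_card _).mpr ⟨hpJinj, by simp [Fintype.card_coe, hJ]⟩
      refine ⟨⟨⟨J, hJ⟩, (Equiv.ofBijective _ hpJbij).trans (J.orderIsoOfFin hJ).toEquiv.symm⟩,
        Finset.mem_univ _, ?_⟩
      funext x
      simp only [Function.comp_apply, Equiv.trans_apply]
      rw [← Finset.coe_orderIsoOfFin_apply]
      simp
    · rintro ⟨J, σ⟩ _
      rfl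
  rw [step2, Fintype.sum_prod_type]


/-- principal minor on a finset, with no card proof needed -/
noncomputable def pminor {n : ℕ} (M : Matrix (Fin n) (Fin n) R) (t : Finset (Fin n)) : R :=
  det (M.submatrix (t.orderEmbOfFin rfl) (t.orderEmbOfFin rfl))

lemma pminor_eq {n k : ℕ} (M : Matrix (Fin n) (Fin n) R) (t : Finset (Fin n)) (h : t.card = k) :
    pminor M t = det (M.submatrix (t.orderEmbOfFin h) (t.orderEmbOfFin h)) := by
  subst h; rfl

lemma det_single_rows {n : ℕ} (M : Matrix (Fin n) (Fin n) R) (s : Finset (Fin n)) :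
    det (of fun i => if i ∈ s then Pi.single i (1 : R) else M i) = pminor M sᶜ := by
  classical
  let e := Equiv.sumCompl (fun a => a ∈ s)
  rw [← det_submatrix_equiv_self e]
  have hblock : (submatrix (of fun i => if i ∈ s then Pi.single i (1 : R) else M i) e e) =
      fromBlocks 1 0 (of fun i j => M i.1 j.1) (of fun i j => M i.1 j.1) := by
    ext i j
    cases i with
    | inl i =>
      cases j with
      | inl j =>
        simp only [submatrix_apply, Equiv.sumCompl_apply_inl, of_apply, e, i.2, if_true,
          fromBlocks_apply₁₁, Pi.single_apply, one_apply, Subtype.ext_iff]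
        exact if_congr ⟨fun h => h.symm, fun h => h.symm⟩ rfl rfl
      | inr j =>
        simp only [submatrix_apply, Equiv.sumCompl_apply_inl, Equiv.sumCompl_apply_inr,
          of_apply, e, i.2, if_true, fromBlocks_apply₁₂, Pi.single_apply, Matrix.zero_apply]
        exact if_neg (fun h => j.2 (by rw [h]; exact i.2))
    | inr i =>
      cases j with
      | inl j =>
        simp only [submatrix_apply, Equiv.sumCompl_apply_inl, Equiv.sumCompl_apply_inr,
          of_apply, e, i.2, if_false, fromBlocks_apply₂₁]
      | inr j =>
        simp only [submatrix_apply, Equiv.sumCompl_apply_inr, of_apply, e, i.2, if_false,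
          fromBlocks_apply₂₂]
  rw [hblock, det_fromBlocks_zero₁₂, det_one, one_mul]
  let φ : Fin (sᶜ.card) ≃ {a // ¬ a ∈ s} :=
    (sᶜ.orderIsoOfFin rfl).toEquiv.trans (Equiv.subtypeEquivRight (fun a => Finset.mem_compl))
  rw [pminor, show M.submatrix (sᶜ.orderEmbOfFin rfl) (sᶜ.orderEmbOfFin rfl) =
      (Matrix.of (fun (i j : {a // ¬ a ∈ s}) => M i.1 j.1)).submatrix φ φ from ?_,
    det_submatrix_equiv_self]
  · rfl

lemma pminor_map {n : ℕ} (M : Matrix (Fin n) (Fin n) R) (t : Finset (Fin n)) :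
    pminor (M.map (Polynomial.C : R →+* R[X])) t = Polynomial.C (pminor M t) := by
  rw [pminor, pminor, show (M.map (Polynomial.C : R →+* R[X])).submatrix (t.orderEmbOfFin rfl)
      (t.orderEmbOfFin rfl) = (M.submatrix (t.orderEmbOfFin rfl) (t.orderEmbOfFin rfl)).map
      (Polynomial.C : R →+* R[X]) from rfl]
  exact ((Polynomial.C : R →+* R[X]).map_det _).symm

lemma charpoly_expansion {n : ℕ} (M : Matrix (Fin n) (Fin n) R) :
    M.charpoly = ∑ s : Finset (Fin n),
      (X : R[X]) ^ s.card * ((-1 : R[X]) ^ (n - s.card) * C (pminor M sᶜ)) := by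
  classical
  let f := (detRowAlternating : (Fin n → R[X]) [⋀^Fin n]→ₗ[R[X]] R[X]).toMultilinearMap
  let a : Fin n → Fin n → R[X] := fun i => (X : R[X]) • (Pi.single i 1 : Fin n → R[X])
  let b : Fin n → Fin n → R[X] := fun i j => -C (M i j)
  have h1 : charmatrix M = Matrix.of (a + b) := by
    ext i j
    by_cases h : i = j
    · subst h
      simp [a, b, charmatrix_apply_eq, Pi.single_apply, sub_eq_add_neg]
    · simp [a, b, charmatrix_apply_ne _ _ _ h, Pi.single_apply, Ne.symm h]
  have h2 : M.charpoly = f (a + b) := by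
    rw [charpoly, h1]; rfl
  rw [h2, f.map_add_univ a b]
  refine Finset.sum_congr rfl fun s _ => ?_
  have step1 : f (s.piecewise a b)
      = (X : R[X]) ^ s.card * f (s.piecewise (fun i => Pi.single i 1) b) := by
    have : s.piecewise a b = s.piecewise
        (fun i => (X : R[X]) • (s.piecewise (fun i => Pi.single i (1 : R[X])) b) i)
        (s.piecewise (fun i => Pi.single i 1) b) := by
      ext i j
      by_cases h : i ∈ s <;> simp [Finset.piecewise, h, a]
    rw [this, f.map_piecewise_smul, Finset.prod_const, smul_eq_mul]
  have step2 : f (s.piecewise (fun i => Pi.single i 1) b)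
      = (-1 : R[X]) ^ (n - s.card) * f (s.piecewise (fun i => Pi.single i 1)
          (fun i j => C (M i j))) := by
    have : s.piecewise (fun i => Pi.single i 1) b = sᶜ.piecewise
        (fun i => (-1 : R[X]) • (s.piecewise (fun i => Pi.single i (1 : R[X]))
          (fun i j => C (M i j))) i)
        (s.piecewise (fun i => Pi.single i 1) (fun i j => C (M i j))) := by
      ext i j
      by_cases h : i ∈ s <;> simp [Finset.piecewise, h, b]
    rw [this, f.map_piecewise_smul, Finset.prod_const, smul_eq_mul, Finset.card_compl,
      Fintype.card_fin]
  rw [step1, step2]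
  congr 1
  congr 1
  have : f (s.piecewise (fun i => Pi.single i 1) (fun i j => C (M i j)))
      = det (of fun i => if i ∈ s then Pi.single i (1 : R[X]) else (M.map C) i) := rfl
  rw [this, det_single_rows, pminor_map]

lemma charpoly_coeff_eq_pminors {n : ℕ} (M : Matrix (Fin n) (Fin n) R) (k : ℕ) (hk : k ≤ n) :
    M.charpoly.coeff (n - k) = (-1 : R) ^ k *
      ∑ I : {s : Finset (Fin n) // s.card = k}, pminor M I.1 := by
  classical
  rw [charpoly_expansion, finset_sum_coeff]
  have hterm : ∀ s : Finset (Fin n),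
      ((X : R[X]) ^ s.card * ((-1 : R[X]) ^ (n - s.card) * C (pminor M sᶜ))).coeff (n - k)
      = if n - k = s.card then (-1 : R) ^ (n - s.card) * pminor M sᶜ else 0 := by
    intro s
    have : (X : R[X]) ^ s.card * ((-1 : R[X]) ^ (n - s.card) * C (pminor M sᶜ))
        = C ((-1 : R) ^ (n - s.card) * pminor M sᶜ) * X ^ s.card := by
      rw [_root_.map_mul, _root_.map_pow, map_neg, _root_.map_one]
      ring
    rw [this, coeff_C_mul_X_pow]
  simp only [hterm]
  rw [← Finset.sum_filter]
  have hre : ∑ s ∈ Finset.univ.filter (fun s : Finset (Fin n) => n - k = s.card),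
      (-1 : R) ^ (n - s.card) * pminor M sᶜ
      = ∑ I : {s : Finset (Fin n) // s.card = k}, (-1 : R) ^ k * pminor M I.1 := by
    rw [← Finset.sum_subtype (Finset.univ.filter (fun s : Finset (Fin n) => s.card = k))
      (by simp) (fun t => (-1 : R) ^ k * pminor M t)]
    refine Finset.sum_nbij' (fun s => sᶜ) (fun t => tᶜ) ?_ ?_ ?_ ?_ ?_
    · intro s hs
      simp only [Finset.mem_filter, Finset.mem_univ, true_and] at hs ⊢
      rw [Finset.card_compl, Fintype.card_fin, ← hs, Nat.sub_sub_self hk]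
    · intro t ht
      simp only [Finset.mem_filter, Finset.mem_univ, true_and] at ht ⊢
      rw [Finset.card_compl, Fintype.card_fin, ht]
    · intro s _; exact compl_compl s
    · intro t _; exact compl_compl t
    · intro s hs
      simp only [Finset.mem_filter, Finset.mem_univ, true_and] at hs
      rw [← hs, Nat.sub_sub_self hk]
  rw [hre, ← Finset.mul_sum]

end Aux


/-- If `A` is a real symmetric `n × n` matrix and `0 ≤ k ≤ n`, then `(-1)^k` times the
coefficient of `x^{n-k}` in the characteristic polynomial of `A²` equals the sum of the
squares of all `k × k` minors of `A`; for `k = 0` both sides are `1`. -/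
theorem coeff_charpoly_sq_eq_sum_sq_minors {n : ℕ} (A : Matrix (Fin n) (Fin n) ℝ)
    (hA : A.IsSymm) (k : ℕ) (hk : k ≤ n) :
    (-1 : ℝ) ^ k * (A ^ 2).charpoly.coeff (n - k) =
      ∑ I : {s : Finset (Fin n) // s.card = k}, ∑ J : {s : Finset (Fin n) // s.card = k},
        (A.minorOn I J) ^ 2 := by
  classical
  rw [charpoly_coeff_eq_pminors _ k hk, ← mul_assoc, ← pow_add, Even.neg_one_pow ⟨k, rfl⟩, one_mul]
  refine Finset.sum_congr rfl fun I _ => ?_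
  rw [pminor_eq _ _ I.2, pow_two,
    Matrix.submatrix_mul A A (I.1.orderEmbOfFin I.2) id (I.1.orderEmbOfFin I.2)
      Function.bijective_id,
    cauchy_binet]
  refine Finset.sum_congr rfl fun J _ => ?_
  have h1 : (A.submatrix (I.1.orderEmbOfFin I.2) id).submatrix id (J.1.orderEmbOfFin J.2)
      = A.submatrix (I.1.orderEmbOfFin I.2) (J.1.orderEmbOfFin J.2) := rfl
  have h2 : (A.submatrix id (I.1.orderEmbOfFin I.2)).submatrix (J.1.orderEmbOfFin J.2) id
      = A.submatrix (J.1.orderEmbOfFin J.2) (I.1.orderEmbOfFin I.2) := rfl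
  rw [h1, h2]
  have h3 : (A.submatrix (J.1.orderEmbOfFin J.2) (I.1.orderEmbOfFin I.2)).det
      = (A.submatrix (I.1.orderEmbOfFin I.2) (J.1.orderEmbOfFin J.2)).det := by
    rw [← Matrix.det_transpose, Matrix.transpose_submatrix, hA.eq]
  rw [h3, Matrix.minorOn, pow_two]
end
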